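/- Let A be an n×n Hermitian complex matrix with all eigenvalues contained in [a,b], let v be a unit vector, and let (V_k, T̂_k, β_k, v_{k+1}) be a Lanczos relation of length k for A with starting vector v. Let t_1, …, t_k denote the eigenvalues of T̂_k and assume they lie in the open interval (a,b). If h : ℝ → ℝ is 2k times continuously differentiable on an open interval containing [a,b], then there exists ξ ∈ (a,b) such that v* h(A) v = e_1* h(T̂_k) e_1 + (h^{(2k)}(ξ)/(2k)!) · v* (∏_{j=1}^{k} (A − t_j I))² v. (This is the Gauss-quadrature error formula: the remainder integral ∫ ∏_j (t−t_j)² dγ(t) with respect to the spectral measure γ of A at v equals v* (∏_j (A − t_j I))² v.) -/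

import Mathlib

open Matrix


section AuxGQ
open Polynomial Set


open Set

lemma iteratedDerivWithin_eq_iteratedDeriv_of_isOpen {f : ℝ → ℝ} {s : Set ℝ} (hs : IsOpen s)
    (n : ℕ) : Set.EqOn (iteratedDerivWithin n f s) (iteratedDeriv n f) s := by
  intro x hx
  rw [iteratedDerivWithin, iteratedDeriv, iteratedFDerivWithin_of_isOpen n hs hx]

lemma hasDerivAt_iteratedDeriv_of_contDiffOn {f : ℝ → ℝ} {s : Set ℝ} (hs : IsOpen s) {N : ℕ}
    (hf : ContDiffOn ℝ N f s) {j : ℕ} (hj : j < N) {x : ℝ} (hx : x ∈ s) :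
    HasDerivAt (iteratedDeriv j f) (iteratedDeriv (j+1) f x) x := by
  have hu : UniqueDiffOn ℝ s := hs.uniqueDiffOn
  have hdiff : DifferentiableOn ℝ (iteratedDerivWithin j f s) s :=
    hf.differentiableOn_iteratedDerivWithin (by exact_mod_cast hj) hu
  have hda : DifferentiableAt ℝ (iteratedDerivWithin j f s) x :=
    (hdiff x hx).differentiableAt (hs.mem_nhds hx)
  have h1 : HasDerivAt (iteratedDerivWithin j f s)
      (derivWithin (iteratedDerivWithin j f s) s x) x := by
    have := hda.hasDerivAt
    rwa [derivWithin_of_isOpen hs hx]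
  have h2 : iteratedDerivWithin (j+1) f s x = derivWithin (iteratedDerivWithin j f s) s x :=
    congrFun iteratedDerivWithin_succ x
  have heq : iteratedDerivWithin j f s =ᶠ[nhds x] iteratedDeriv j f :=
    Filter.eventuallyEq_of_mem (hs.mem_nhds hx)
      (iteratedDerivWithin_eq_iteratedDeriv_of_isOpen hs j)
  have h3 : HasDerivAt (iteratedDeriv j f) (derivWithin (iteratedDerivWithin j f s) s x) x :=
    h1.congr_of_eventuallyEq heq.symm
  rwa [← h2, iteratedDerivWithin_eq_iteratedDeriv_of_isOpen hs (j+1) hx] at h3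

lemma continuousOn_iteratedDeriv_of_contDiffOn {f : ℝ → ℝ} {s : Set ℝ} (hs : IsOpen s) {N : ℕ}
    (hf : ContDiffOn ℝ N f s) : ContinuousOn (iteratedDeriv N f) s := by
  have := hf.continuousOn_iteratedDerivWithin (m := N) le_rfl hs.uniqueDiffOn
  exact this.congr fun x hx => (iteratedDerivWithin_eq_iteratedDeriv_of_isOpen hs N hx).symm


open Set

lemma rolle_finset {c d : ℝ} {g g' : ℝ → ℝ}
    (hg : ∀ x ∈ Set.Ioo c d, HasDerivAt g (g' x) x)
    (Z : Finset ℝ) (hZ : (Z : Set ℝ) ⊆ Set.Ioo c d) (hz : ∀ x ∈ Z, g x = 0) :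
    ∃ Z' : Finset ℝ, Z.card ≤ Z'.card + 1 ∧ (∀ x ∈ Z', g' x = 0) ∧
      ∀ x ∈ Z', ∃ p ∈ Z, ∃ q ∈ Z, p < x ∧ x < q ∧ ∀ r ∈ Z, r ≤ p ∨ q ≤ r := by
  generalize hn : Z.card = m
  induction m using Nat.strong_induction_on generalizing Z with
  | _ m IH =>
  subst hn
  rcases le_or_gt Z.card 1 with hc | hc
  · exact ⟨∅, by simpa using hc, by simp, by simp⟩
  · have hne : Z.Nonempty := Finset.card_pos.mp (by omega)
    set M := Z.max' hne with hM
    have hMZ : M ∈ Z := Z.max'_mem hne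
    set Z₀ := Z.erase M with hZ₀
    have hcard₀ : Z₀.card = Z.card - 1 := Finset.card_erase_of_mem hMZ
    have hne₀ : Z₀.Nonempty := Finset.card_pos.mp (by omega)
    set M₀ := Z₀.max' hne₀ with hM₀
    have hM₀Z₀ : M₀ ∈ Z₀ := Z₀.max'_mem hne₀
    have hM₀Z : M₀ ∈ Z := Finset.mem_of_mem_erase hM₀Z₀
    have hM₀M : M₀ < M :=
      lt_of_le_of_ne (Z.le_max' _ hM₀Z) (Finset.ne_of_mem_erase hM₀Z₀)
    have hsub : Set.Icc M₀ M ⊆ Set.Ioo c d := by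
      intro x hx
      have h1 := hZ hM₀Z; have h2 := hZ hMZ
      simp only [Set.mem_Ioo, Set.mem_Icc] at *
      constructor
      · linarith [hx.1]
      · linarith [hx.2]
    have hcont : ContinuousOn g (Set.Icc M₀ M) := fun x hx =>
      ((hg x (hsub hx)).continuousAt).continuousWithinAt
    have hval : g M₀ = g M := by rw [hz _ hM₀Z, hz _ hMZ]
    obtain ⟨x₀, hx₀mem, hx₀⟩ := exists_hasDerivAt_eq_zero hM₀M hcont hval
      (fun x hx => hg x (hsub (Set.mem_Icc_of_Ioo hx)))
    have hZ₀sub : (Z₀ : Set ℝ) ⊆ Set.Ioo c d := fun x hx =>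
      hZ (Finset.mem_of_mem_erase hx)
    have hz₀ : ∀ x ∈ Z₀, g x = 0 := fun x hx => hz x (Finset.mem_of_mem_erase hx)
    obtain ⟨Z'₀, hc₀, hzero₀, hwit₀⟩ := IH Z₀.card (by omega) Z₀ hZ₀sub hz₀ rfl
    have hx₀notin : x₀ ∉ Z'₀ := by
      intro hmem
      obtain ⟨p, hp, q, hq, hpx, hxq, _⟩ := hwit₀ x₀ hmem
      have h1 : q ≤ M₀ := Z₀.le_max' _ hq
      have h2 : x₀ < M₀ := lt_of_lt_of_le hxq h1
      exact absurd hx₀mem.1 (by linarith)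
    refine ⟨insert x₀ Z'₀, ?_, ?_, ?_⟩
    · rw [Finset.card_insert_of_notMem hx₀notin]; omega
    · intro x hx
      rcases Finset.mem_insert.mp hx with rfl | hx
      · exact hx₀
      · exact hzero₀ x hx
    · intro x hx
      rcases Finset.mem_insert.mp hx with rfl | hx
      · refine ⟨M₀, hM₀Z, M, hMZ, hx₀mem.1, hx₀mem.2, ?_⟩
        intro r hr
        rcases eq_or_ne r M with rfl | hrM
        · exact Or.inr le_rfl
        · exact Or.inl (Z₀.le_max' _ (Finset.mem_erase.mpr ⟨hrM, hr⟩))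
      · obtain ⟨p, hp, q, hq, hpx, hxq, hgap⟩ := hwit₀ x hx
        refine ⟨p, Finset.mem_of_mem_erase hp, q, Finset.mem_of_mem_erase hq, hpx, hxq, ?_⟩
        intro r hr
        rcases eq_or_ne r M with rfl | hrM
        · exact Or.inr (le_trans (Z₀.le_max' _ hq) hM₀M.le)
        · exact hgap r (Finset.mem_erase.mpr ⟨hrM, hr⟩)

lemma rolle_chain {c d a b : ℝ} (N : ℕ) (G : ℕ → ℝ → ℝ)
    (hG : ∀ j < N, ∀ x ∈ Set.Ioo c d, HasDerivAt (G j) (G (j+1) x) x)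
    (hab : Set.Ioo a b ⊆ Set.Ioo c d)
    (Z : Finset ℝ) (hZ : (Z : Set ℝ) ⊆ Set.Ioo a b) (hcard : N + 1 ≤ Z.card)
    (hz : ∀ x ∈ Z, G 0 x = 0) :
    ∃ ξ ∈ Set.Ioo a b, G N ξ = 0 := by
  induction N generalizing G Z with
  | zero =>
    have hpos : 0 < Z.card := by omega
    obtain ⟨x, hx⟩ := Finset.card_pos.mp hpos
    exact ⟨x, hZ hx, hz x hx⟩
  | succ N IH =>
    obtain ⟨Z', hcard', hzero', hwit'⟩ := rolle_finset (hG 0 (by omega)) Z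
      (fun x hx => hab (hZ hx)) hz
    have hZ'sub : (Z' : Set ℝ) ⊆ Set.Ioo a b := by
      intro x hx
      obtain ⟨p, hp, q, hq, hpx, hxq, _⟩ := hwit' x hx
      have hpa := hZ hp; have hqb := hZ hq
      simp only [Set.mem_Ioo] at *
      exact ⟨lt_of_le_of_lt hpa.1.le hpx, lt_of_lt_of_le hxq hqb.2.le⟩
    exact IH (fun j => G (j + 1)) (fun j hj => hG (j+1) (by omega)) Z' hZ'sub
      (by omega) hzero'


open Polynomial

lemma iterate_derivative_eq_C (n : ℕ) (p : ℝ[X]) (hp : p.natDegree ≤ n) :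
    derivative^[n] p = C ((n.factorial : ℝ) * p.coeff n) := by
  induction n generalizing p with
  | zero =>
    simp only [Function.iterate_zero, id_eq, Nat.factorial_zero, Nat.cast_one, one_mul]
    exact (Polynomial.eq_C_of_natDegree_le_zero hp) ▸ by simp
  | succ n IH =>
    rw [Function.iterate_succ_apply, IH (derivative p)
      (by
        have := Polynomial.natDegree_derivative_le p
        omega),
      Polynomial.coeff_derivative]
    congr 1
    rw [Nat.factorial_succ]
    push_cast
    ring

lemma sq_X_sub_C_dvd {p : ℝ[X]} {a : ℝ} (h0 : p.eval a = 0) (h1 : p.derivative.eval a = 0) :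
    (X - C a) ^ 2 ∣ p := by
  obtain ⟨u, hu⟩ := Polynomial.dvd_iff_isRoot.mpr h0
  have hd : p.derivative = u + (X - C a) * u.derivative := by
    rw [hu, Polynomial.derivative_mul, Polynomial.derivative_X_sub_C, one_mul]
  have hua : u.eval a = 0 := by
    have := h1
    rw [hd] at this
    simpa using this
  obtain ⟨w, hw⟩ := Polynomial.dvd_iff_isRoot.mpr hua
  refine ⟨w, ?_⟩
  rw [hu, hw]; ring

lemma hermite_interpolation {k : ℕ} (t : Fin k → ℝ) (ht : Function.Injective t)
    (y y' : Fin k → ℝ) :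
    ∃ P : ℝ[X], P.degree < (2 * k : ℕ) ∧ (∀ j, P.eval (t j) = y j) ∧
      (∀ j, P.derivative.eval (t j) = y' j) := by
  let E : Polynomial.degreeLT ℝ (2 * k) →ₗ[ℝ] (Fin k → ℝ) × (Fin k → ℝ) :=
    { toFun := fun p => (fun j => (p : ℝ[X]).eval (t j),
        fun j => ((p : ℝ[X]).derivative).eval (t j))
      map_add' := by intro p q; ext j <;> simp
      map_smul' := by intro c p; ext j <;> simp }
  have hinj : Function.Injective E := by
    rw [← LinearMap.ker_eq_bot, LinearMap.ker_eq_bot']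
    intro p hp
    have hev : ∀ j, (p : ℝ[X]).eval (t j) = 0 := fun j => congrFun (congrArg Prod.fst hp) j
    have hev' : ∀ j, ((p : ℝ[X]).derivative).eval (t j) = 0 :=
      fun j => congrFun (congrArg Prod.snd hp) j
    by_contra hne
    have hpne : (p : ℝ[X]) ≠ 0 := fun h => hne (Subtype.ext h)
    have hdvd : (∏ j : Fin k, (X - C (t j)) ^ 2) ∣ (p : ℝ[X]) := by
      refine Finset.prod_dvd_of_coprime ?_ ?_
      · intro i _ j _ hij
        exact ((Polynomial.pairwise_coprime_X_sub_C ht hij).pow)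
      · intro j _
        exact sq_X_sub_C_dvd (hev j) (hev' j)
    have hdeg : ((∏ j : Fin k, (X - C (t j)) ^ 2).natDegree) = 2 * k := by
      rw [Polynomial.natDegree_prod]
      · simp [Polynomial.natDegree_pow, mul_comm]
      · intro j _
        exact pow_ne_zero _ (Polynomial.X_sub_C_ne_zero _)
    have hle : 2 * k ≤ (p : ℝ[X]).natDegree := by
      have := Polynomial.natDegree_le_of_dvd hdvd hpne
      omega
    have hlt : (p : ℝ[X]).natDegree < 2 * k :=
      (Polynomial.natDegree_lt_iff_degree_lt hpne).mpr (Polynomial.mem_degreeLT.mp p.2)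
    omega
  have hfr : Module.finrank ℝ (Polynomial.degreeLT ℝ (2 * k)) =
      Module.finrank ℝ ((Fin k → ℝ) × (Fin k → ℝ)) := by
    rw [(Polynomial.degreeLTEquiv ℝ (2 * k)).finrank_eq]
    simp [Module.finrank_prod]
    ring
  have : FiniteDimensional ℝ (Polynomial.degreeLT ℝ (2 * k)) :=
    Module.Finite.equiv (Polynomial.degreeLTEquiv ℝ (2 * k)).symm
  have hsurj : Function.Surjective E :=
    (LinearMap.injective_iff_surjective_of_finrank_eq_finrank hfr).mp hinj
  obtain ⟨p, hp⟩ := hsurj (y, y')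
  refine ⟨(p : ℝ[X]), Polynomial.mem_degreeLT.mp p.2, ?_, ?_⟩
  · intro j; exact congrFun (congrArg Prod.fst hp) j
  · intro j; exact congrFun (congrArg Prod.snd hp) j


open Set

lemma weighted_mean_value {a b : ℝ} (hab : a < b) {D : ℝ → ℝ}
    (hD : ContinuousOn D (Set.Ioo a b)) {ι : Type*} [Fintype ι]
    (w : ι → ℝ) (hw : ∀ i, 0 ≤ w i) (ξ : ι → ℝ) (hξ : ∀ i, ξ i ∈ Set.Ioo a b) :
    ∃ x ∈ Set.Ioo a b, ∑ i, w i * D (ξ i) = D x * ∑ i, w i := by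
  set S := ∑ i, w i with hS
  rcases le_or_gt S 0 with hS0 | hS0
  · have hSz : S = 0 := le_antisymm hS0 (Finset.sum_nonneg fun i _ => hw i)
    have hall : ∀ i ∈ Finset.univ, w i = 0 :=
      (Finset.sum_eq_zero_iff_of_nonneg (fun i _ => hw i)).mp hSz
    refine ⟨(a + b) / 2, by constructor <;> linarith, ?_⟩
    rw [hSz, mul_zero]
    exact Finset.sum_eq_zero fun i _ => by rw [hall i (Finset.mem_univ i), zero_mul]
  · set Q := (∑ i, w i * D (ξ i)) / S with hQ
    have hQS : ∑ i, w i * D (ξ i) = Q * S := by rw [hQ, div_mul_cancel₀ _ hS0.ne']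
    have hex : ∀ (P : ι → Prop), ¬ (∀ i, 0 < w i → P i) →
        ∃ i, 0 < w i ∧ ¬ P i := by
      intro P hP
      push_neg at hP
      exact hP
    have h₀ : ∃ i, 0 < w i ∧ D (ξ i) ≤ Q := by
      by_contra hcon
      push_neg at hcon
      have hlt : Q * S < ∑ i, w i * D (ξ i) := by
        rw [show Q * S = ∑ i, w i * Q by rw [Finset.mul_sum]; congr 1; ext i; ring]
        have hexi : ∃ i : ι, 0 < w i := by
          by_contra hno
          push_neg at hno
          have : S ≤ 0 := Finset.sum_nonpos fun i _ => hno i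
          linarith
        obtain ⟨i₀, hi₀⟩ := hexi
        refine Finset.sum_lt_sum (fun i _ => ?_) ⟨i₀, Finset.mem_univ _, ?_⟩
        · rcases (hw i).lt_or_eq with hpos | hzero
          · exact mul_le_mul_of_nonneg_left (hcon i hpos).le (hw i)
          · rw [← hzero]; simp
        · exact mul_lt_mul_of_pos_left (hcon i₀ hi₀) hi₀
      rw [hQS] at hlt
      exact lt_irrefl _ hlt
    have h₁ : ∃ i, 0 < w i ∧ Q ≤ D (ξ i) := by
      by_contra hcon
      push_neg at hcon
      have hlt : ∑ i, w i * D (ξ i) < Q * S := by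
        rw [show Q * S = ∑ i, w i * Q by rw [Finset.mul_sum]; congr 1; ext i; ring]
        have hexi : ∃ i : ι, 0 < w i := by
          by_contra hno
          push_neg at hno
          have : S ≤ 0 := Finset.sum_nonpos fun i _ => hno i
          linarith
        obtain ⟨i₀, hi₀⟩ := hexi
        refine Finset.sum_lt_sum (fun i _ => ?_) ⟨i₀, Finset.mem_univ _, ?_⟩
        · rcases (hw i).lt_or_eq with hpos | hzero
          · exact mul_le_mul_of_nonneg_left (hcon i hpos).le (hw i)
          · rw [← hzero]; simp
        · exact mul_lt_mul_of_pos_left (hcon i₀ hi₀) hi₀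
      rw [hQS] at hlt
      exact lt_irrefl _ hlt
    obtain ⟨i₀, _, hle₀⟩ := h₀
    obtain ⟨i₁, _, hle₁⟩ := h₁
    have hordsub : Set.uIcc (ξ i₀) (ξ i₁) ⊆ Set.Ioo a b :=
      Set.ordConnected_Ioo.uIcc_subset (hξ i₀) (hξ i₁)
    have hcont : ContinuousOn D (Set.uIcc (ξ i₀) (ξ i₁)) := hD.mono hordsub
    have hmem : Q ∈ Set.uIcc (D (ξ i₀)) (D (ξ i₁)) := Set.mem_uIcc.mpr (Or.inl ⟨hle₀, hle₁⟩)
    obtain ⟨x, hxmem, hx⟩ := intermediate_value_uIcc hcont hmem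
    exact ⟨x, hordsub hxmem, by rw [hQS, hx]⟩

end AuxGQ

section AuxGQ2
open Polynomial Set
lemma hermite_remainder {k : ℕ} (hk : 0 < k) {a b c d : ℝ} (hab : a < b)
    (hcd : Set.Icc a b ⊆ Set.Ioo c d) {h : ℝ → ℝ}
    (hh : ContDiffOn ℝ (2 * k) h (Set.Ioo c d))
    (t : Fin k → ℝ) (htab : ∀ j, t j ∈ Set.Ioo a b) (htinj : Function.Injective t)
    (pI : ℝ[X]) (hpIdeg : pI.degree < (2 * k : ℕ))
    (hpIe : ∀ j, pI.eval (t j) = h (t j))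
    (hpId : ∀ j, pI.derivative.eval (t j) = iteratedDeriv 1 h (t j))
    (x : ℝ) (hx : x ∈ Set.Icc a b) :
    ∃ ξ ∈ Set.Ioo a b,
      h x - pI.eval x
        = (iteratedDeriv (2 * k) h ξ / (2 * k).factorial) * (∏ j, (x - t j)) ^ 2 := by
  set q : ℝ[X] := ∏ j, (X - C (t j)) with hq
  set ω : ℝ[X] := q ^ 2 with hω
  have hqmonic : q.Monic := monic_prod_of_monic _ _ (fun j _ => monic_X_sub_C (t j))
  have hqdeg : q.natDegree = k := by
    rw [hq, Polynomial.natDegree_prod _ _ (fun j _ => X_sub_C_ne_zero (t j))]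
    simp [Polynomial.natDegree_X_sub_C]
  have hωmonic : ω.Monic := hqmonic.pow 2
  have hωdeg : ω.natDegree = 2 * k := by
    rw [hω, Polynomial.natDegree_pow, hqdeg]
  have hωeval : ∀ s, ω.eval s = (∏ j, (s - t j)) ^ 2 := by
    intro s
    rw [hω, Polynomial.eval_pow, hq, Polynomial.eval_prod]
    simp
  have hqeval_t : ∀ j, q.eval (t j) = 0 := by
    intro j
    rw [hq, Polynomial.eval_prod]
    apply Finset.prod_eq_zero (Finset.mem_univ j)
    simp
  have hωeval_t : ∀ j, ω.eval (t j) = 0 := by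
    intro j; rw [hω, Polynomial.eval_pow, hqeval_t j]; ring
  have hωdeval_t : ∀ j, ω.derivative.eval (t j) = 0 := by
    intro j
    rw [hω, Polynomial.derivative_pow]
    simp [hqeval_t j]
  by_cases hωx : ω.eval x = 0
  · -- x is a node
    have hex : ∃ j, x = t j := by
      rw [hωeval] at hωx
      have : (∏ j, (x - t j)) = 0 := by
        nlinarith [sq_nonneg (∏ j, (x - t j))]
      obtain ⟨j, _, hj⟩ := Finset.prod_eq_zero_iff.mp this
      exact ⟨j, by linarith⟩
    obtain ⟨j, rfl⟩ := hex
    refine ⟨(a + b)/2, by rw [Set.mem_Ioo]; constructor <;> linarith, ?_⟩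
    rw [hpIe j]
    have : (∏ j', (t j - t j')) = 0 :=
      Finset.prod_eq_zero (Finset.mem_univ j) (by ring)
    rw [this]
    ring
  · -- main case
    set K : ℝ := (h x - pI.eval x) / ω.eval x with hK
    set P : ℝ[X] := pI + C K * ω with hP
    set G : ℕ → ℝ → ℝ := fun jj s => iteratedDeriv jj h s - (derivative^[jj] P).eval s with hG
    have hGder : ∀ jj < 2 * k, ∀ s ∈ Set.Ioo c d, HasDerivAt (G jj) (G (jj + 1) s) s := by
      intro jj hjj s hs
      have h1 := hasDerivAt_iteratedDeriv_of_contDiffOn isOpen_Ioo hh hjj hs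
      have h2 : HasDerivAt (fun y => (derivative^[jj] P).eval y)
          ((derivative (derivative^[jj] P)).eval s) s := Polynomial.hasDerivAt _ s
      have h12 := h1.sub h2
      have h3 : G (jj+1) s = iteratedDeriv (jj+1) h s - (derivative (derivative^[jj] P)).eval s := by
        simp only [hG]
        rw [Function.iterate_succ_apply']
      rw [h3]
      exact h12
    have hG0t : ∀ j, G 0 (t j) = 0 := by
      intro j
      simp only [hG, Function.iterate_zero, id_eq, hP, Polynomial.eval_add,
        Polynomial.eval_mul, Polynomial.eval_C]
      rw [hpIe j, hωeval_t j, iteratedDeriv_zero]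
      ring
    have hG0x : G 0 x = 0 := by
      simp only [hG, Function.iterate_zero, id_eq, hP, Polynomial.eval_add,
        Polynomial.eval_mul, Polynomial.eval_C]
      rw [hK, iteratedDeriv_zero]
      field_simp
      ring
    have hG1t : ∀ j, G 1 (t j) = 0 := by
      intro j
      have hstep : G 1 (t j) = iteratedDeriv 1 h (t j) - (derivative P).eval (t j) := by
        simp only [hG, Function.iterate_one]
      rw [hstep, hP, Polynomial.derivative_add, Polynomial.derivative_mul,
        Polynomial.derivative_C]
      simp only [Polynomial.eval_add, Polynomial.eval_mul, Polynomial.eval_C, zero_mul,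
        Polynomial.eval_zero, zero_add]
      rw [hpId j, hωdeval_t j]
      ring
    -- first Rolle step
    set Z₀ : Finset ℝ := insert x (Finset.image t Finset.univ) with hZ₀
    have hxnot : x ∉ Finset.image t Finset.univ := by
      intro hmem
      obtain ⟨j, _, hj⟩ := Finset.mem_image.mp hmem
      apply hωx
      rw [← hj]
      exact hωeval_t j
    have hcard₀ : Z₀.card = k + 1 := by
      rw [hZ₀, Finset.card_insert_of_notMem hxnot,
        Finset.card_image_of_injective _ htinj, Finset.card_univ, Fintype.card_fin]
    have hZ₀sub : (Z₀ : Set ℝ) ⊆ Set.Ioo c d := by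
      intro s hs
      rcases Finset.mem_insert.mp hs with rfl | hsmem
      · exact hcd hx
      · obtain ⟨j, _, rfl⟩ := Finset.mem_image.mp hsmem
        exact hcd (Set.mem_Icc_of_Ioo (htab j))
    have hZ₀zero : ∀ s ∈ Z₀, G 0 s = 0 := by
      intro s hs
      rcases Finset.mem_insert.mp hs with rfl | hsmem
      · exact hG0x
      · obtain ⟨j, _, rfl⟩ := Finset.mem_image.mp hsmem
        exact hG0t j
    obtain ⟨Z₁', hc₁, hz₁, hwit₁⟩ := rolle_finset
      (fun s hs => hGder 0 (by omega) s hs) Z₀ hZ₀sub hZ₀zero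
    have hdisj : Disjoint Z₁' (Finset.image t Finset.univ) := by
      rw [Finset.disjoint_left]
      intro s hs hmem
      obtain ⟨p, hp, q', hq', hps, hsq, hgap⟩ := hwit₁ s hs
      rcases hgap s (Finset.mem_insert.mpr (Or.inr hmem)) with h1 | h1 <;> linarith
    set Z₁ : Finset ℝ := Z₁' ∪ Finset.image t Finset.univ with hZ₁
    have hZ₁card : 2 * k ≤ Z₁.card := by
      rw [hZ₁, Finset.card_union_of_disjoint hdisj,
        Finset.card_image_of_injective _ htinj, Finset.card_univ, Fintype.card_fin]
      omega
    have hZ₀Icc : ∀ s ∈ Z₀, s ∈ Set.Icc a b := by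
      intro s hs
      rcases Finset.mem_insert.mp hs with rfl | hsmem
      · exact hx
      · obtain ⟨j, _, rfl⟩ := Finset.mem_image.mp hsmem
        exact Set.mem_Icc_of_Ioo (htab j)
    have hZ₁sub : (Z₁ : Set ℝ) ⊆ Set.Ioo a b := by
      intro s hs
      rcases Finset.mem_union.mp hs with hs1 | hs2
      · obtain ⟨p, hp, q', hq', hps, hsq, _⟩ := hwit₁ s hs1
        have hpmem := hZ₀Icc p hp
        have hqmem := hZ₀Icc q' hq'
        rw [Set.mem_Icc] at hpmem hqmem
        rw [Set.mem_Ioo]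
        constructor
        · linarith [hpmem.1]
        · linarith [hqmem.2]
      · obtain ⟨j, _, rfl⟩ := Finset.mem_image.mp hs2
        exact htab j
    have hZ₁zero : ∀ s ∈ Z₁, G 1 s = 0 := by
      intro s hs
      rcases Finset.mem_union.mp hs with hs1 | hs2
      · exact hz₁ s hs1
      · obtain ⟨j, _, rfl⟩ := Finset.mem_image.mp hs2
        exact hG1t j
    obtain ⟨ξ, hξmem, hξzero⟩ := rolle_chain (2 * k - 1) (fun jj => G (jj + 1))
      (fun jj hjj s hs => hGder (jj + 1) (by omega) s hs)
      (Set.Ioo_subset_Icc_self.trans hcd) Z₁ hZ₁sub (by omega) hZ₁zero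
    have h2k : 2 * k - 1 + 1 = 2 * k := by omega
    rw [h2k] at hξzero
    -- extract the value
    have hPdeg : P.natDegree ≤ 2 * k := by
      rw [hP]
      refine le_trans (Polynomial.natDegree_add_le _ _) (max_le ?_ ?_)
      · exact Polynomial.natDegree_le_iff_degree_le.mpr hpIdeg.le
      · refine le_trans (Polynomial.natDegree_mul_le) ?_
        rw [Polynomial.natDegree_C, hωdeg]
        omega
    have hPcoeff : P.coeff (2 * k) = K := by
      rw [hP, Polynomial.coeff_add, Polynomial.coeff_C_mul,
        Polynomial.coeff_eq_zero_of_degree_lt hpIdeg]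
      have : ω.coeff (2 * k) = 1 := by
        rw [← hωdeg]
        exact hωmonic.coeff_natDegree
      rw [this]
      ring
    have hiter : derivative^[2 * k] P = C (((2 * k).factorial : ℝ) * K) := by
      rw [iterate_derivative_eq_C _ _ hPdeg, hPcoeff]
    have hξval : iteratedDeriv (2 * k) h ξ = ((2 * k).factorial : ℝ) * K := by
      have hz : G (2 * k) ξ = 0 := hξzero
      simp only [hG] at hz
      rw [hiter] at hz
      simp only [Polynomial.eval_C] at hz
      linarith
    refine ⟨ξ, hξmem, ?_⟩
    rw [hξval, ← hωeval]
    have hfact : ((2 * k).factorial : ℝ) ≠ 0 := Nat.cast_ne_zero.mpr (Nat.factorial_ne_zero _)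
    rw [hK]
    field_simp

end AuxGQ2

section AuxGQ3
open Matrix


open Matrix

variable {𝕜 : Type} [RCLike 𝕜] {m : ℕ}

/-- weights of the spectral measure -/
noncomputable def specWt {A : Matrix (Fin m) (Fin m) 𝕜} (hA : A.IsHermitian)
    (v : Fin m → 𝕜) (i : Fin m) : ℝ :=
  ‖(star (hA.eigenvectorUnitary : Matrix (Fin m) (Fin m) 𝕜) *ᵥ v) i‖ ^ 2

lemma specWt_nonneg {A : Matrix (Fin m) (Fin m) 𝕜} (hA : A.IsHermitian)
    (v : Fin m → 𝕜) (i : Fin m) : 0 ≤ specWt hA v i := sq_nonneg _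

lemma cfc_quadratic {A : Matrix (Fin m) (Fin m) 𝕜} (hA : A.IsHermitian)
    (v : Fin m → 𝕜) (f : ℝ → ℝ) :
    star v ⬝ᵥ (hA.cfc f) *ᵥ v
      = ((∑ i, specWt hA v i * f (hA.eigenvalues i) : ℝ) : 𝕜) := by
  set U : Matrix (Fin m) (Fin m) 𝕜 := (hA.eigenvectorUnitary : Matrix (Fin m) (Fin m) 𝕜)
  set c : Fin m → 𝕜 := star U *ᵥ v with hc
  have h1 : (hA.cfc f) *ᵥ v = U *ᵥ ((diagonal (RCLike.ofReal ∘ f ∘ hA.eigenvalues)) *ᵥ c) := by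
    rw [Matrix.IsHermitian.cfc, Unitary.conjStarAlgAut_apply, hc, mulVec_mulVec, mulVec_mulVec]
  rw [h1]
  have h2 : star v ⬝ᵥ (U *ᵥ ((diagonal (RCLike.ofReal ∘ f ∘ hA.eigenvalues)) *ᵥ c))
      = star c ⬝ᵥ ((diagonal (RCLike.ofReal ∘ f ∘ hA.eigenvalues)) *ᵥ c) := by
    rw [dotProduct_mulVec]
    congr 1
    rw [hc, star_mulVec, ← Matrix.star_eq_conjTranspose, star_star]
  rw [h2]
  have h3 : ∀ i, ((diagonal (RCLike.ofReal ∘ f ∘ hA.eigenvalues)) *ᵥ c) i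
      = (f (hA.eigenvalues i) : 𝕜) * c i := by
    intro i
    simp [mulVec_diagonal]
  rw [dotProduct]
  push_cast
  apply Finset.sum_congr rfl
  intro i _
  rw [h3 i, Pi.star_apply]
  rw [show star (c i) * ((f (hA.eigenvalues i) : 𝕜) * c i)
      = (f (hA.eigenvalues i) : 𝕜) * (star (c i) * c i) by ring]
  rw [RCLike.star_def, RCLike.conj_mul]
  rw [specWt]
  push_cast
  ring


open Matrix

lemma cfc_pow_eq {𝕜 : Type} [RCLike 𝕜] {m : ℕ} {A : Matrix (Fin m) (Fin m) 𝕜}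
    (hA : A.IsHermitian) (p : ℕ) : hA.cfc (fun x : ℝ => x ^ p) = A ^ p := by
  rw [← hA.cfc_eq]
  exact cfc_pow_id A p hA

lemma sum_poly_transfer {N : ℕ} {ι κ : Type} [Fintype ι] [Fintype κ]
    (w : ι → ℝ) (lam : ι → ℝ) (μ : κ → ℝ) (tt : κ → ℝ)
    (hmom : ∀ m' < N, (∑ i, w i * lam i ^ m') = ∑ j, μ j * tt j ^ m')
    (P : Polynomial ℝ) (hP : P.natDegree < N) :
    ∑ i, w i * P.eval (lam i) = ∑ j, μ j * P.eval (tt j) := by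
  have key : ∀ {σ : Type} [Fintype σ] (u : σ → ℝ) (z : σ → ℝ),
      ∑ i, u i * P.eval (z i)
        = ∑ m' ∈ Finset.range N, P.coeff m' * ∑ i, u i * z i ^ m' := by
    intro σ _ u z
    calc ∑ i, u i * P.eval (z i)
        = ∑ i, ∑ m' ∈ Finset.range N, P.coeff m' * (u i * z i ^ m') := by
          refine Finset.sum_congr rfl fun i _ => ?_
          rw [Polynomial.eval_eq_sum_range' hP, Finset.mul_sum]
          exact Finset.sum_congr rfl fun m' _ => by ring
      _ = ∑ m' ∈ Finset.range N, ∑ i, P.coeff m' * (u i * z i ^ m') := Finset.sum_comm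
      _ = ∑ m' ∈ Finset.range N, P.coeff m' * ∑ i, u i * z i ^ m' := by
          exact Finset.sum_congr rfl fun m' _ => by rw [Finset.mul_sum]
  rw [key w lam, key μ tt]
  exact Finset.sum_congr rfl fun m' hm' => by rw [hmom m' (Finset.mem_range.mp hm')]

end AuxGQ3

/-- A Lanczos relation of length `k` for an `n × n` Hermitian matrix `A` over `𝕜`
with starting unit vector `v`: orthonormal columns `V` with first column `v`, a real
symmetric tridiagonal matrix `T` with positive subdiagonal, `β > 0` and a unit vector
`vNext` orthogonal to the columns of `V`, such that `A V = V T + β vNext eₖ*`. -/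
structure LanczosRelation (𝕜 : Type) [RCLike 𝕜] (n k : ℕ)
    (A : Matrix (Fin n) (Fin n) 𝕜) (v : Fin n → 𝕜) where
  kpos : 0 < k
  V : Matrix (Fin n) (Fin k) 𝕜
  T : Matrix (Fin k) (Fin k) ℝ
  β : ℝ
  vNext : Fin n → 𝕜
  orthonormal : Vᴴ * V = 1
  firstCol : (fun i => V i ⟨0, kpos⟩) = v
  symm : T.IsHermitian
  tridiag : ∀ i j : Fin k, (i : ℕ) + 1 < (j : ℕ) → T i j = 0
  subdiag_pos : ∀ (i : ℕ) (h : i + 1 < k), 0 < T ⟨i + 1, h⟩ ⟨i, by omega⟩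
  β_pos : 0 < β
  vNext_unit : star vNext ⬝ᵥ vNext = 1
  vNext_orth : Vᴴ *ᵥ vNext = 0
  relation : A * V = V * T.map (algebraMap ℝ 𝕜) +
      (algebraMap ℝ 𝕜 β) • vecMulVec vNext (Pi.single ⟨k - 1, by omega⟩ 1)

section AuxGQ4
section Lanczos

variable {n k : ℕ} {A : Matrix (Fin n) (Fin n) ℂ} {v : Fin n → ℂ}

/-- tridiagonal support lemma -/
lemma tri_pow_support (L : LanczosRelation ℂ n k A v) (m : ℕ) (i : Fin k)
    (him : (m : ℕ) < (i : ℕ)) :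
    (L.T ^ m *ᵥ Pi.single (⟨0, L.kpos⟩ : Fin k) 1) i = 0 := by
  induction m generalizing i with
  | zero =>
    simp only [pow_zero, one_mulVec]
    exact Pi.single_eq_of_ne (by intro hver; rw [hver] at him; simp at him) 1
  | succ m IH =>
    rw [pow_succ', ← mulVec_mulVec]
    rw [mulVec]
    apply Finset.sum_eq_zero
    intro j _
    rcases le_or_gt (j : ℕ) m with hj | hj
    · have hTij : L.T i j = 0 := by
        have hlow : ((j : ℕ) + 1 : ℕ) < (i : ℕ) := by omega
        have h0 := L.tridiag j i hlow
        have hsym : L.T i j = L.T j i := by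
          conv_lhs => rw [← L.symm.eq]
          rw [Matrix.conjTranspose_apply]
          exact star_trivial _
        rw [hsym, h0]
      show L.T i j * (L.T ^ m *ᵥ Pi.single (⟨0, L.kpos⟩ : Fin k) 1) j = 0
      rw [hTij, zero_mul]
    · rw [IH j hj, mul_zero]

end Lanczos

section Lanczos2

variable {n k : ℕ} {A : Matrix (Fin n) (Fin n) ℂ} {v : Fin n → ℂ}

lemma cast_mulVec (M : Matrix (Fin k) (Fin k) ℝ) (x : Fin k → ℝ) :
    (M.map (algebraMap ℝ ℂ)) *ᵥ (fun i => ((x i : ℝ) : ℂ)) = fun i => (((M *ᵥ x) i : ℝ) : ℂ) := by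
  ext i
  simp only [mulVec, dotProduct, Matrix.map_apply]
  push_cast
  rfl

lemma cast_dotProduct (x z : Fin k → ℝ) :
    (fun i => ((x i : ℝ) : ℂ)) ⬝ᵥ (fun i => ((z i : ℝ) : ℂ)) = ((x ⬝ᵥ z : ℝ) : ℂ) := by
  simp only [dotProduct]
  push_cast
  rfl

lemma star_cast (x : Fin k → ℝ) :
    star (fun i => ((x i : ℝ) : ℂ)) = fun i => ((x i : ℝ) : ℂ) := by
  ext i
  simp [Complex.conj_ofReal]

lemma cast_single (p : Fin k) :
    (fun i => (((Pi.single p 1 : Fin k → ℝ) i : ℝ) : ℂ)) = Pi.single p (1 : ℂ) := by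
  ext i
  by_cases h : i = p
  · subst h; simp
  · simp [Pi.single_eq_of_ne h]

lemma lanczos_VdotV (L : LanczosRelation ℂ n k A v) (y z : Fin k → ℂ) :
    star (L.V *ᵥ y) ⬝ᵥ (L.V *ᵥ z) = star y ⬝ᵥ z := by
  rw [star_mulVec, dotProduct_mulVec, vecMul_vecMul]
  rw [show L.Vᴴ * L.V = 1 from L.orthonormal]
  rw [vecMul_one]

lemma lanczos_Vdot_vNext (L : LanczosRelation ℂ n k A v) (y : Fin k → ℂ) :
    star (L.V *ᵥ y) ⬝ᵥ L.vNext = 0 := by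
  rw [star_mulVec, ← dotProduct_mulVec, L.vNext_orth, dotProduct_zero]

lemma vecMulVec_mulVec_eq (u : Fin n → ℂ) (w x : Fin k → ℂ) :
    vecMulVec u w *ᵥ x = (w ⬝ᵥ x) • u := by
  ext i
  simp only [mulVec, dotProduct, vecMulVec_apply, Pi.smul_apply, smul_eq_mul, Finset.sum_mul]
  apply Finset.sum_congr rfl
  intro j _
  ring

lemma lanczos_krylov (L : LanczosRelation ℂ n k A v) (m : ℕ) (hm : m + 1 ≤ k) :
    (A ^ m) *ᵥ v
      = L.V *ᵥ (fun i => (((L.T ^ m *ᵥ Pi.single (⟨0, L.kpos⟩ : Fin k) 1) i : ℝ) : ℂ)) := by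
  induction m with
  | zero =>
    simp only [pow_zero, one_mulVec]
    rw [cast_single]
    have h1 : L.V *ᵥ Pi.single (⟨0, L.kpos⟩ : Fin k) (1 : ℂ) = fun i => L.V i ⟨0, L.kpos⟩ := by
      rw [mulVec_single]
      ext i; simp
    rw [h1, L.firstCol]
  | succ m IH =>
    have hm' : m + 1 ≤ k := by omega
    rw [pow_succ', ← mulVec_mulVec, IH hm', mulVec_mulVec, L.relation, add_mulVec,
      smul_mulVec, vecMulVec_mulVec_eq]
    have hdot : (Pi.single (⟨k - 1, by omega⟩ : Fin k) (1:ℂ))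
        ⬝ᵥ (fun i => (((L.T ^ m *ᵥ Pi.single (⟨0, L.kpos⟩ : Fin k) 1) i : ℝ) : ℂ)) = 0 := by
      rw [single_dotProduct]
      rw [tri_pow_support L m ⟨k - 1, by omega⟩ (by show m < k - 1; omega)]
      simp
    rw [hdot, zero_smul, smul_zero, add_zero, ← mulVec_mulVec, cast_mulVec]
    have hstep : (L.T *ᵥ (L.T ^ m *ᵥ Pi.single (⟨0, L.kpos⟩ : Fin k) 1))
        = L.T ^ (m + 1) *ᵥ Pi.single (⟨0, L.kpos⟩ : Fin k) 1 := by
      rw [mulVec_mulVec, ← pow_succ']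
    rw [hstep]

lemma lanczos_real_dot (L : LanczosRelation ℂ n k A v) (p q : ℕ) :
    (L.T ^ p *ᵥ Pi.single (⟨0, L.kpos⟩ : Fin k) 1)
        ⬝ᵥ (L.T ^ q *ᵥ Pi.single (⟨0, L.kpos⟩ : Fin k) 1)
      = Pi.single (⟨0, L.kpos⟩ : Fin k) 1
          ⬝ᵥ (L.T ^ (p + q) *ᵥ Pi.single (⟨0, L.kpos⟩ : Fin k) 1) := by
  have hTt : L.Tᵀ = L.T := by
    ext i j
    rw [Matrix.transpose_apply]
    conv_lhs => rw [← L.symm.eq]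
    rw [Matrix.conjTranspose_apply]
    exact star_trivial _
  have h1 : L.T ^ p *ᵥ Pi.single (⟨0, L.kpos⟩ : Fin k) 1
      = Pi.single (⟨0, L.kpos⟩ : Fin k) 1 ᵥ* (L.T ^ p) := by
    rw [← mulVec_transpose]

    rw [Matrix.transpose_pow, hTt]
  rw [h1, ← dotProduct_mulVec, mulVec_mulVec, ← pow_add]

lemma lanczos_moment (hA : A.IsHermitian) (L : LanczosRelation ℂ n k A v)
    (m : ℕ) (hm : m ≤ 2 * k - 1) :
    star v ⬝ᵥ (A ^ m) *ᵥ v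
      = ((Pi.single (⟨0, L.kpos⟩ : Fin k) 1
          ⬝ᵥ (L.T ^ m *ᵥ Pi.single (⟨0, L.kpos⟩ : Fin k) 1) : ℝ) : ℂ) := by
  have hk := L.kpos
  rcases le_or_gt m (2 * k - 2) with hcase | hcase
  · -- m = p + q with p, q ≤ k - 1
    have hex : ∃ p q, p + 1 ≤ k ∧ q + 1 ≤ k ∧ m = p + q := by
      refine ⟨min m (k - 1), m - min m (k - 1), by omega, by omega, by omega⟩
    obtain ⟨p, q, hpk, hqk, hmpq⟩ := hex
    rw [hmpq, pow_add, ← mulVec_mulVec, dotProduct_mulVec]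
    have hstar : star v ᵥ* A ^ p = star (A ^ p *ᵥ v) := by
      rw [star_mulVec, (hA.pow p).eq]
    rw [hstar, lanczos_krylov L p hpk, lanczos_krylov L q hqk, lanczos_VdotV,
      star_cast, cast_dotProduct, lanczos_real_dot]
  · -- m = 2k - 1 = (k-1) + ((k-1) + 1)
    have hex : ∃ p, p + 1 ≤ k ∧ m = p + (p + 1) := ⟨k - 1, by omega, by omega⟩
    obtain ⟨p, hpk, hmpq⟩ := hex
    rw [hmpq, pow_add, ← mulVec_mulVec, dotProduct_mulVec]
    have hstar : star v ᵥ* A ^ p = star (A ^ p *ᵥ v) := by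
      rw [star_mulVec, (hA.pow p).eq]
    rw [hstar, lanczos_krylov L p hpk]
    rw [pow_succ', ← mulVec_mulVec, lanczos_krylov L p hpk, mulVec_mulVec,
      L.relation, add_mulVec, smul_mulVec, vecMulVec_mulVec_eq]
    rw [dotProduct_add, dotProduct_smul, dotProduct_smul, lanczos_Vdot_vNext,
      smul_zero, smul_zero, add_zero]
    rw [← mulVec_mulVec, cast_mulVec, lanczos_VdotV, star_cast, cast_dotProduct]
    have hstep : (L.T *ᵥ (L.T ^ p *ᵥ Pi.single (⟨0, L.kpos⟩ : Fin k) 1))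
        = L.T ^ (p + 1) *ᵥ Pi.single (⟨0, L.kpos⟩ : Fin k) 1 := by
      rw [mulVec_mulVec, ← pow_succ']
    rw [hstep, lanczos_real_dot]

end Lanczos2

section Distinct

variable {n k : ℕ} {A : Matrix (Fin n) (Fin n) ℂ} {v : Fin n → ℂ}

lemma tri_eigenvector_zero (L : LanczosRelation ℂ n k A v) (x : Fin k → ℝ) (t : ℝ)
    (hx : L.T *ᵥ x = t • x) (h0 : x ⟨0, L.kpos⟩ = 0) : x = 0 := by
  have key : ∀ m (hm : m < k), x ⟨m, hm⟩ = 0 := by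
    intro m
    induction m using Nat.strong_induction_on with
    | _ m IH =>
    intro hm
    match m with
    | 0 => exact h0
    | Nat.succ m' =>
      have hm' : m' < k := by omega
      have hrow : (L.T *ᵥ x) ⟨m', hm'⟩ = t * x ⟨m', hm'⟩ := by
        rw [hx]; rfl
      have hsum : (L.T *ᵥ x) ⟨m', hm'⟩
          = L.T ⟨m', hm'⟩ ⟨m' + 1, hm⟩ * x ⟨m' + 1, hm⟩ := by
        rw [mulVec, dotProduct]
        apply Finset.sum_eq_single
        · intro j _ hj
          rcases lt_or_ge (m' + 1 : ℕ) (j : ℕ) with hgt | hle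
          · rw [L.tridiag ⟨m', hm'⟩ j (by exact hgt), zero_mul]
          · have hjm : (j : ℕ) ≤ m' := by
              rcases Nat.lt_or_ge (j : ℕ) (m' + 1) with h1 | h1
              · omega
              · exfalso; exact hj (Fin.ext (show (j : ℕ) = m' + 1 by omega))
            have : x j = 0 := by
              have := IH (j : ℕ) (by omega) j.isLt
              rwa [Fin.eta] at this
            rw [this, mul_zero]
        · intro habs
          exact absurd (Finset.mem_univ _) habs
      have hx' : x ⟨m', hm'⟩ = 0 := IH m' (by omega) hm'
      have hpos : 0 < L.T ⟨m' + 1, hm⟩ ⟨m', by omega⟩ := L.subdiag_pos m' hm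
      have hsymm : L.T ⟨m', hm'⟩ ⟨m' + 1, hm⟩ = L.T ⟨m' + 1, hm⟩ ⟨m', by omega⟩ := by
        conv_lhs => rw [← L.symm.eq]
        rw [Matrix.conjTranspose_apply]
        exact star_trivial _
      have : L.T ⟨m', hm'⟩ ⟨m' + 1, hm⟩ * x ⟨m' + 1, hm⟩ = 0 := by
        rw [← hsum, hrow, hx', mul_zero]
      rcases mul_eq_zero.mp this with h | h
      · exfalso; rw [hsymm] at h; exact absurd h (ne_of_gt hpos)
      · exact h
  ext i
  have := key (i : ℕ) i.isLt
  rw [Fin.eta] at this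
  rw [this]
  rfl

lemma ritz_distinct (L : LanczosRelation ℂ n k A v) :
    Function.Injective L.symm.eigenvalues := by
  intro j j' hjj'
  by_contra hne
  set U : Matrix (Fin k) (Fin k) ℝ := (Matrix.IsHermitian.eigenvectorUnitary L.symm :
    Matrix (Fin k) (Fin k) ℝ) with hU
  have hcol : ∀ j₀ : Fin k, (fun i => U i j₀) = ⇑(L.symm.eigenvectorBasis j₀) := by
    intro j₀; ext i
    exact Matrix.IsHermitian.eigenvectorUnitary_apply L.symm i j₀
  have heig : ∀ j₀ : Fin k, L.T *ᵥ (fun i => U i j₀)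
      = L.symm.eigenvalues j₀ • (fun i => U i j₀) := by
    intro j₀
    rw [hcol j₀]
    exact L.symm.mulVec_eigenvectorBasis j₀
  have horth : star U * U = 1 :=
    ((Unitary.mem_iff).mp (Matrix.IsHermitian.eigenvectorUnitary L.symm).prop).1
  have hdot : ∀ j₀ j₁ : Fin k, (∑ i, U i j₀ * U i j₁) = if j₀ = j₁ then 1 else 0 := by
    intro j₀ j₁
    have := congrFun (congrFun horth j₀) j₁
    rw [Matrix.mul_apply] at this
    simp only [Matrix.star_apply, star_trivial] at this
    rw [this]
    simp [Matrix.one_apply]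
  set u := fun i => U i j with hu
  set u' := fun i => U i j' with hu'
  set e0 : Fin k := ⟨0, L.kpos⟩ with he0
  -- y = u' e0 • u - u e0 • u' is an eigenvector with first component 0
  have hy : L.T *ᵥ (u' e0 • u - u e0 • u') = L.symm.eigenvalues j • (u' e0 • u - u e0 • u') := by
    rw [mulVec_sub, mulVec_smul, mulVec_smul, heig j, heig j', ← hjj']
    ext i
    simp only [Pi.sub_apply, Pi.smul_apply, smul_eq_mul]
    ring
  have hy0 : (u' e0 • u - u e0 • u') e0 = 0 := by
    simp only [Pi.sub_apply, Pi.smul_apply, smul_eq_mul]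
    ring
  have hyz := tri_eigenvector_zero L _ _ hy hy0
  -- dot the relation u' e0 • u = u e0 • u' with u
  have hdot01 : (∑ i, u i * u' i) = 0 := by
    have := hdot j j'
    rw [if_neg hne] at this
    exact this
  have hdot00 : (∑ i, u i * u i) = 1 := by
    have := hdot j j
    rw [if_pos rfl] at this
    exact this
  have hdot11 : (∑ i, u' i * u' i) = 1 := by
    have := hdot j' j'
    rw [if_pos rfl] at this
    exact this
  have hue : u' e0 = 0 := by
    have hcomb : ∀ i, u' e0 * u i = u e0 * u' i := by
      intro i
      have := congrFun hyz i
      simp only [Pi.sub_apply, Pi.smul_apply, smul_eq_mul, Pi.zero_apply] at this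
      linarith
    have : u' e0 * (∑ i, u i * u i) = u e0 * (∑ i, u i * u' i) := by
      rw [Finset.mul_sum, Finset.mul_sum]
      apply Finset.sum_congr rfl
      intro i _
      calc u' e0 * (u i * u i) = (u' e0 * u i) * u i := by ring
        _ = (u e0 * u' i) * u i := by rw [hcomb i]
        _ = u e0 * (u i * u' i) := by ring
    rw [hdot00, hdot01, mul_one, mul_zero] at this
    exact this
  have : u' = 0 := by
    apply tri_eigenvector_zero L u' (L.symm.eigenvalues j') (heig j') hue
  rw [this] at hdot11
  simp at hdot11

end Distinct

end AuxGQ4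

/-- **Gauss quadrature error formula for the Lanczos approximation of `v* h(A) v`**:
if all eigenvalues of the Hermitian matrix `A` lie in `[a,b]`, the Ritz values
`t_j` (eigenvalues of the Lanczos tridiagonal matrix `T̂_k`) lie in `(a,b)`, and `h`
is `2k` times continuously differentiable on an open interval containing `[a,b]`,
then there is `ξ ∈ (a,b)` with
`v* h(A) v = e₁* h(T̂_k) e₁ + h⁽²ᵏ⁾(ξ)/(2k)! ⬝ v* (∏ⱼ (A - tⱼ I))² v`. -/
theorem gauss_quadrature_error
    {n k : ℕ} {a b : ℝ} {A : Matrix (Fin n) (Fin n) ℂ} (hA : A.IsHermitian)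
    (hspec : ∀ i, hA.eigenvalues i ∈ Set.Icc a b)
    {v : Fin n → ℂ} (hv : star v ⬝ᵥ v = 1)
    (L : LanczosRelation ℂ n k A v)
    (ht : ∀ j, L.symm.eigenvalues j ∈ Set.Ioo a b)
    (h : ℝ → ℝ) (c d : ℝ) (hcd : Set.Icc a b ⊆ Set.Ioo c d)
    (hh : ContDiffOn ℝ (2 * k) h (Set.Ioo c d)) :
    ∃ ξ ∈ Set.Ioo a b,
      star v ⬝ᵥ (hA.cfc h) *ᵥ v
        = ((Pi.single (⟨0, L.kpos⟩ : Fin k) 1 ⬝ᵥ (L.symm.cfc h) *ᵥ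
              Pi.single (⟨0, L.kpos⟩ : Fin k) 1 : ℝ) : ℂ)
          + ((iteratedDeriv (2 * k) h ξ / (2 * k).factorial : ℝ) : ℂ)
            * (star v ⬝ᵥ (hA.cfc fun t => (∏ j, (t - L.symm.eigenvalues j)) ^ 2) *ᵥ v) := by
  classical
  have hk := L.kpos
  have hab : a < b := lt_trans (ht ⟨0, hk⟩).1 (ht ⟨0, hk⟩).2
  -- moments agree up to degree 2k-1
  have hmom : ∀ m < 2 * k,
      (∑ i, specWt hA v i * hA.eigenvalues i ^ m)
        = ∑ j, specWt L.symm (Pi.single (⟨0, L.kpos⟩ : Fin k) 1) j * L.symm.eigenvalues j ^ m := by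
    intro m hm
    have h1 : star v ⬝ᵥ (A ^ m) *ᵥ v
        = ((∑ i, specWt hA v i * hA.eigenvalues i ^ m : ℝ) : ℂ) := by
      rw [← cfc_pow_eq hA m]
      exact cfc_quadratic hA v _
    have h2 := lanczos_moment hA L m (by omega)
    have h3 : Pi.single (⟨0, L.kpos⟩ : Fin k) 1
          ⬝ᵥ ((L.T ^ m) *ᵥ Pi.single (⟨0, L.kpos⟩ : Fin k) 1)
        = ∑ j, specWt L.symm (Pi.single (⟨0, L.kpos⟩ : Fin k) 1) j * L.symm.eigenvalues j ^ m := by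
      have h4 := cfc_quadratic L.symm (Pi.single (⟨0, L.kpos⟩ : Fin k) 1) (fun x : ℝ => x ^ m)
      rw [cfc_pow_eq L.symm m, RCLike.ofReal_real_eq_id, id_eq] at h4
      rw [← h4, star_trivial]
    have h5 : ((∑ i, specWt hA v i * hA.eigenvalues i ^ m : ℝ) : ℂ)
        = ((∑ j, specWt L.symm (Pi.single (⟨0, L.kpos⟩ : Fin k) 1) j
            * L.symm.eigenvalues j ^ m : ℝ) : ℂ) := by
      rw [← h1, h2, h3]
    exact_mod_cast h5
  -- the three quadratic forms
  have hLHS : star v ⬝ᵥ (hA.cfc h) *ᵥ v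
      = ((∑ i, specWt hA v i * h (hA.eigenvalues i) : ℝ) : ℂ) := cfc_quadratic hA v h
  have hRHS1 : (Pi.single (⟨0, L.kpos⟩ : Fin k) 1 ⬝ᵥ (L.symm.cfc h) *ᵥ
        Pi.single (⟨0, L.kpos⟩ : Fin k) 1 : ℝ)
      = ∑ j, specWt L.symm (Pi.single (⟨0, L.kpos⟩ : Fin k) 1) j * h (L.symm.eigenvalues j) := by
    have h4 := cfc_quadratic L.symm (Pi.single (⟨0, L.kpos⟩ : Fin k) 1) h
    rw [star_trivial, RCLike.ofReal_real_eq_id, id_eq] at h4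
    exact h4
  have hRHS2 : star v ⬝ᵥ (hA.cfc fun t => (∏ j, (t - L.symm.eigenvalues j)) ^ 2) *ᵥ v
      = ((∑ i, specWt hA v i * (∏ j, (hA.eigenvalues i - L.symm.eigenvalues j)) ^ 2 : ℝ) : ℂ) :=
    cfc_quadratic hA v _
  -- Hermite interpolation of h at the Ritz values
  obtain ⟨pI, hdeg, hval, hder⟩ := hermite_interpolation L.symm.eigenvalues (ritz_distinct L)
    (fun j => h (L.symm.eigenvalues j)) (fun j => iteratedDeriv 1 h (L.symm.eigenvalues j))
  have hrem : ∀ i, ∃ ξ ∈ Set.Ioo a b,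
      h (hA.eigenvalues i) - pI.eval (hA.eigenvalues i)
        = (iteratedDeriv (2 * k) h ξ / (2 * k).factorial)
            * (∏ j, (hA.eigenvalues i - L.symm.eigenvalues j)) ^ 2 :=
    fun i => hermite_remainder hk hab hcd hh L.symm.eigenvalues ht (ritz_distinct L) pI hdeg
      hval hder (hA.eigenvalues i) (hspec i)
  choose ξf hξmem hξeq using hrem
  have hIooab : Set.Ioo a b ⊆ Set.Ioo c d := Set.Ioo_subset_Icc_self.trans hcd
  have hDcont : ContinuousOn (fun s => iteratedDeriv (2 * k) h s / (2 * k).factorial)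
      (Set.Ioo a b) := by
    apply ContinuousOn.div_const
    exact (continuousOn_iteratedDeriv_of_contDiffOn isOpen_Ioo hh).mono hIooab
  have hw'nn : ∀ i, 0 ≤ specWt hA v i
      * (∏ j, (hA.eigenvalues i - L.symm.eigenvalues j)) ^ 2 :=
    fun i => mul_nonneg (specWt_nonneg hA v i) (sq_nonneg _)
  obtain ⟨ξ, hξab, hmv⟩ := weighted_mean_value hab hDcont
    (fun i => specWt hA v i * (∏ j, (hA.eigenvalues i - L.symm.eigenvalues j)) ^ 2)
    hw'nn ξf hξmem
  refine ⟨ξ, hξab, ?_⟩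
  have hdegnat : pI.natDegree < 2 * k := by
    rcases eq_or_ne pI 0 with rfl | hne
    · simp only [Polynomial.natDegree_zero]
      omega
    · exact (Polynomial.natDegree_lt_iff_degree_lt hne).mpr (by exact_mod_cast hdeg)
  have htrans : ∑ i, specWt hA v i * pI.eval (hA.eigenvalues i)
      = ∑ j, specWt L.symm (Pi.single (⟨0, L.kpos⟩ : Fin k) 1) j
          * pI.eval (L.symm.eigenvalues j) :=
    sum_poly_transfer _ _ _ _ hmom pI hdegnat
  have key : (∑ i, specWt hA v i * h (hA.eigenvalues i))
      = (∑ j, specWt L.symm (Pi.single (⟨0, L.kpos⟩ : Fin k) 1) j * h (L.symm.eigenvalues j))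
        + (iteratedDeriv (2 * k) h ξ / (2 * k).factorial)
            * (∑ i, specWt hA v i * (∏ j, (hA.eigenvalues i - L.symm.eigenvalues j)) ^ 2) := by
    have hsplit : ∀ i, specWt hA v i * h (hA.eigenvalues i)
        = specWt hA v i * pI.eval (hA.eigenvalues i)
          + (specWt hA v i * (∏ j, (hA.eigenvalues i - L.symm.eigenvalues j)) ^ 2)
              * (iteratedDeriv (2 * k) h (ξf i) / (2 * k).factorial) := by
      intro i
      have h6 : h (hA.eigenvalues i) = pI.eval (hA.eigenvalues i)
          + (iteratedDeriv (2 * k) h (ξf i) / (2 * k).factorial)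
              * (∏ j, (hA.eigenvalues i - L.symm.eigenvalues j)) ^ 2 := by
        linarith [hξeq i]
      rw [h6]
      ring
    calc (∑ i, specWt hA v i * h (hA.eigenvalues i))
        = ∑ i, (specWt hA v i * pI.eval (hA.eigenvalues i)
            + (specWt hA v i * (∏ j, (hA.eigenvalues i - L.symm.eigenvalues j)) ^ 2)
                * (iteratedDeriv (2 * k) h (ξf i) / (2 * k).factorial)) :=
          Finset.sum_congr rfl fun i _ => hsplit i
      _ = (∑ i, specWt hA v i * pI.eval (hA.eigenvalues i))
          + ∑ i, (specWt hA v i * (∏ j, (hA.eigenvalues i - L.symm.eigenvalues j)) ^ 2)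
              * (iteratedDeriv (2 * k) h (ξf i) / (2 * k).factorial) := Finset.sum_add_distrib
      _ = (∑ j, specWt L.symm (Pi.single (⟨0, L.kpos⟩ : Fin k) 1) j
              * pI.eval (L.symm.eigenvalues j))
          + (iteratedDeriv (2 * k) h ξ / (2 * k).factorial)
              * (∑ i, specWt hA v i
                  * (∏ j, (hA.eigenvalues i - L.symm.eigenvalues j)) ^ 2) := by
            rw [htrans, hmv]
      _ = _ := by
            congr 1
            exact Finset.sum_congr rfl fun j _ => by rw [hval j]
  rw [hLHS, hRHS2, hRHS1, key]
  push_cast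
  ring
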